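/- (Theorem 4.2, matrix operators are the bounded operators.) Let A : ℕ → ℕ → K be an infinite matrix such that (M1) for every n, Tendsto (fun m => A m n) atTop (nhds 0) (each column tends to 0), and (M2) there exists C : ℝ with ‖A m n‖ ≤ C for all m, n (bounded entries). Then there exists a unique continuous K-linear operator T : H →L[K] H with (T (e n)) m = A m n for all m, n : ℕ. -/

import Mathlib

open Filter

noncomputable section

variable (K : Type*) [NontriviallyNormedField K] [IsUltrametricDist K]
  [CompleteSpace K] [StarRing K] [NormedStarGroup K]

/-- The p-adic coordinate Hilbert space: zero-convergent sequences in `K` with sup norm. -/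
abbrev H := ZeroAtInftyContinuousMap ℕ K

/-- The standard basis vectors of `H K`. -/
def e (n : ℕ) : H K where
  toFun := fun m => if m = n then 1 else 0
  continuous_toFun := continuous_of_discreteTopology
  zero_at_infty' := by
    rw [Filter.cocompact_eq_cofinite, Nat.cofinite_eq_atTop]
    refine Filter.Tendsto.congr' ?_ tendsto_const_nhds
    filter_upwards [Filter.eventually_gt_atTop n] with m hm
    simp [Nat.ne_of_gt hm]

/-- The canonical inner product on `H K`: `⟪x, y⟫ = ∑' i, star (x i) * y i`. -/
def inner' (x y : H K) : K := ∑' i, star (x i) * y i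

/-- A bounded operator is of trace class if its matrix entries vanish along the
cofinite filter of `ℕ × ℕ`. -/
def IsTraceClass (T : H K →L[K] H K) : Prop :=
  Tendsto (fun q : ℕ × ℕ => (T (e K q.2)) q.1) Filter.cofinite (nhds 0)

lemma norm_apply_le (x : H K) (m : ℕ) : ‖x m‖ ≤ ‖x‖ := by
  rw [← ZeroAtInftyContinuousMap.norm_toBCF_eq_norm]
  exact x.toBCF.norm_coe_le_norm m

lemma norm_le_of_forall (x : H K) {C : ℝ} (hC : 0 ≤ C) (h : ∀ m, ‖x m‖ ≤ C) : ‖x‖ ≤ C := by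
  rw [← ZeroAtInftyContinuousMap.norm_toBCF_eq_norm]
  exact (BoundedContinuousFunction.norm_le hC).2 h

lemma tendsto_apply_zero (x : H K) : Tendsto (fun n => x n) atTop (nhds 0) := by
  have := zero_at_infty x
  rwa [Filter.cocompact_eq_cofinite, Nat.cofinite_eq_atTop] at this

lemma coe_finset_sum {ι : Type*} (s : Finset ι) (f : ι → H K) (m : ℕ) :
    (∑ i ∈ s, f i) m = ∑ i ∈ s, f i m := by
  classical
  induction s using Finset.cons_induction with
  | empty => simp
  | cons a s ha ih =>
    rw [Finset.sum_cons, Finset.sum_cons, ZeroAtInftyContinuousMap.coe_add, Pi.add_apply, ih]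

/-- An infinite matrix with zero-convergent columns and bounded entries determines a
unique bounded operator on `H`. -/
theorem stmt3 (A : ℕ → ℕ → K)
    (h1 : ∀ n : ℕ, Tendsto (fun m => A m n) atTop (nhds 0))
    (h2 : ∃ C : ℝ, ∀ m n : ℕ, ‖A m n‖ ≤ C) :
    ∃! T : H K →L[K] H K, ∀ m n : ℕ, (T (e K n)) m = A m n := by
  classical
  obtain ⟨C₀, hC₀⟩ := h2
  set C : ℝ := max C₀ 1 with hCdef
  have hC1 : (1 : ℝ) ≤ C := le_max_right _ _
  have hCpos : (0 : ℝ) < C := zero_lt_one.trans_le hC1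
  have hC0 : (0 : ℝ) ≤ C := hCpos.le
  have hA : ∀ m n, ‖A m n‖ ≤ C := fun m n => (hC₀ m n).trans (le_max_left _ _)
  -- summability of rows against any x
  have hsum : ∀ (x : H K) (m : ℕ), Summable (fun n => A m n * x n) := by
    intro x m
    apply NonarchimedeanAddGroup.summable_of_tendsto_cofinite_zero
    rw [Nat.cofinite_eq_atTop]
    apply squeeze_zero_norm (a := fun n => C * ‖x n‖)
    · intro n
      rw [norm_mul]
      exact mul_le_mul_of_nonneg_right (hA m n) (norm_nonneg _)
    · have := ((tendsto_apply_zero K x).norm).const_mul C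
      simpa using this
  -- pointwise bound
  have hbound : ∀ (x : H K) (m : ℕ), ‖∑' n, A m n * x n‖ ≤ C * ‖x‖ := by
    intro x m
    apply IsUltrametricDist.norm_tsum_le_of_forall_le_of_nonneg
      (mul_nonneg hC0 (norm_nonneg _))
    intro n
    rw [norm_mul]
    exact mul_le_mul (hA m n) (norm_apply_le K x n) (norm_nonneg _) hC0
  -- zero at infinity
  have hzero : ∀ x : H K, Tendsto (fun m => ∑' n, A m n * x n) atTop (nhds 0) := by
    intro x
    rw [NormedAddCommGroup.tendsto_nhds_zero]
    intro ε hε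
    obtain ⟨N, hN⟩ := (Metric.tendsto_atTop.mp (tendsto_apply_zero K x)) (ε / (2 * C))
      (by positivity)
    have htail : ∀ m, ‖∑' n, A m (n + N) * x (n + N)‖ ≤ ε / 2 := by
      intro m
      apply IsUltrametricDist.norm_tsum_le_of_forall_le_of_nonneg (by positivity)
      intro n
      have hx : ‖x (n + N)‖ ≤ ε / (2 * C) := by
        have := hN (n + N) (Nat.le_add_left _ _)
        rw [dist_zero_right] at this
        exact this.le
      calc ‖A m (n + N) * x (n + N)‖ = ‖A m (n + N)‖ * ‖x (n + N)‖ := norm_mul _ _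
        _ ≤ C * (ε / (2 * C)) := mul_le_mul (hA _ _) hx (norm_nonneg _) hC0
        _ = ε / 2 := by field_simp
    have hhead : Tendsto (fun m => ∑ n ∈ Finset.range N, A m n * x n) atTop (nhds 0) := by
      have := tendsto_finset_sum (Finset.range N)
        (fun n _ => ((h1 n).mul_const (x n) :
          Tendsto (fun m => A m n * x n) atTop (nhds (0 * x n))))
      simpa using this
    obtain ⟨M, hM⟩ := Metric.tendsto_atTop.mp hhead (ε / 2) (half_pos hε)
    rw [eventually_atTop]
    refine ⟨M, fun m hm => ?_⟩
    have hsplit : (∑' n, A m n * x n)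
        = (∑ n ∈ Finset.range N, A m n * x n) + ∑' n, A m (n + N) * x (n + N) :=
      (Summable.sum_add_tsum_nat_add N (hsum x m)).symm
    rw [hsplit]
    refine lt_of_le_of_lt (IsUltrametricDist.norm_add_le_max _ _) ?_
    rw [sup_lt_iff]
    constructor
    · have := hM m hm
      rw [dist_zero_right] at this
      linarith
    · exact lt_of_le_of_lt (htail m) (half_lt_self hε)
  -- the underlying function
  let F : H K → H K := fun x =>
    { toFun := fun m => ∑' n, A m n * x n
      continuous_toFun := continuous_of_discreteTopology
      zero_at_infty' := by
        rw [Filter.cocompact_eq_cofinite, Nat.cofinite_eq_atTop]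
        exact hzero x }
  have hFapp : ∀ (x : H K) (m : ℕ), F x m = ∑' n, A m n * x n := fun _ _ => rfl
  -- linear map
  let L : H K →ₗ[K] H K :=
    { toFun := F
      map_add' := by
        intro x y
        apply ZeroAtInftyContinuousMap.ext
        intro m
        rw [ZeroAtInftyContinuousMap.coe_add, Pi.add_apply, hFapp, hFapp, hFapp,
          ← Summable.tsum_add (hsum x m) (hsum y m)]
        apply tsum_congr
        intro n
        rw [ZeroAtInftyContinuousMap.coe_add, Pi.add_apply, mul_add]
      map_smul' := by
        intro c x
        apply ZeroAtInftyContinuousMap.ext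
        intro m
        rw [RingHom.id_apply, ZeroAtInftyContinuousMap.coe_smul, Pi.smul_apply, smul_eq_mul,
          hFapp, hFapp, ← tsum_mul_left]
        apply tsum_congr
        intro n
        rw [ZeroAtInftyContinuousMap.coe_smul, Pi.smul_apply, smul_eq_mul]
        ring }
  -- continuous linear map
  let T : H K →L[K] H K := L.mkContinuous C (fun x =>
    norm_le_of_forall K (F x) (mul_nonneg hC0 (norm_nonneg _)) (fun m => hbound x m))
  have hTapp : ∀ (x : H K) (m : ℕ), T x m = ∑' n, A m n * x n := fun _ _ => rfl
  have hTe : ∀ m n : ℕ, (T (e K n)) m = A m n := by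
    intro m n
    rw [hTapp]
    have he : ∀ k, (e K n) k = if k = n then 1 else 0 := fun _ => rfl
    rw [tsum_eq_single n]
    · rw [he, if_pos rfl, mul_one]
    · intro k hk
      rw [he, if_neg hk, mul_zero]
  refine ⟨T, hTe, ?_⟩
  intro T' hT'
  have he : ∀ n, T' (e K n) = T (e K n) := fun n =>
    ZeroAtInftyContinuousMap.ext fun m => by rw [hT' m n, hTe m n]
  apply ContinuousLinearMap.ext
  intro x
  -- partial sums converge to x
  set s : ℕ → H K := fun N => ∑ n ∈ Finset.range N, x n • e K n with hs_def
  have hsapp : ∀ N m, s N m = if m < N then x m else 0 := by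
    intro N m
    rw [hs_def]
    rw [coe_finset_sum]
    have : ∀ n ∈ Finset.range N, (x n • e K n) m = if n = m then x n else 0 := by
      intro n _
      rw [ZeroAtInftyContinuousMap.coe_smul, Pi.smul_apply, smul_eq_mul]
      show x n * (if m = n then 1 else 0) = _
      by_cases h : n = m
      · subst h; simp
      · simp [h, Ne.symm h]
    rw [Finset.sum_congr rfl this, Finset.sum_ite_eq' (Finset.range N) m (fun k => x k)]
    simp [Finset.mem_range]
  have hs : Tendsto s atTop (nhds x) := by
    rw [tendsto_iff_norm_sub_tendsto_zero]
    rw [NormedAddCommGroup.tendsto_nhds_zero]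
    intro ε hε
    obtain ⟨N₀, hN₀⟩ := Metric.tendsto_atTop.mp (tendsto_apply_zero K x) (ε / 2) (half_pos hε)
    rw [eventually_atTop]
    refine ⟨N₀, fun N hN => ?_⟩
    have : ‖s N - x‖ ≤ ε / 2 := by
      apply norm_le_of_forall K _ (by positivity)
      intro m
      rw [ZeroAtInftyContinuousMap.coe_sub, Pi.sub_apply, hsapp]
      by_cases h : m < N
      · simp [h, half_pos hε |>.le]
      · rw [if_neg h, zero_sub, norm_neg]
        have := hN₀ m (le_trans hN (not_lt.mp h))
        rw [dist_zero_right] at this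
        exact this.le
    rw [Real.norm_of_nonneg (norm_nonneg _)]
    linarith
  have hc1 : Tendsto (fun N => T' (s N)) atTop (nhds (T' x)) :=
    (T'.continuous.tendsto x).comp hs
  have hc2 : Tendsto (fun N => T (s N)) atTop (nhds (T x)) :=
    (T.continuous.tendsto x).comp hs
  have heq : ∀ N, T' (s N) = T (s N) := by
    intro N
    rw [hs_def]
    simp only [map_sum, map_smul]
    exact Finset.sum_congr rfl fun n _ => by rw [he n]
  rw [show (fun N => T' (s N)) = fun N => T (s N) from funext heq] at hc1
  exact tendsto_nhds_unique hc1 hc2
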